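/- Let L be a finitely generated free ℤ-module equipped with a symmetric ℤ-valued bilinear form (·,·) such that (α,α) ∈ 2ℤ for all α ∈ L. Then there exists a function ε : L × L → {1, −1} satisfying, for all α, β, γ ∈ L: (i) ε(α,β)·ε(α+β,γ) = ε(α,β+γ)·ε(β,γ); (ii) ε(α,β) = (−1)^{(α,β)}·ε(β,α); (iii) ε(α,−α) = (−1)^{(α,α)/2}; and (iv) ε(0,α) = ε(α,0) = 1. -/

import Mathlib

/-- For an even lattice `L` there exists a 2-cocycle `ε : L × L → {±1}` with the
standard properties used to construct the twisted group algebra `ℂ{L}`. -/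
theorem exists_lattice_cocycle {L : Type*} [AddCommGroup L] [Module ℤ L]
    [Module.Free ℤ L] [Module.Finite ℤ L]
    (B : L →ₗ[ℤ] L →ₗ[ℤ] ℤ) (hsymm : ∀ x y : L, B x y = B y x)
    (heven : ∀ x : L, ∃ k : ℤ, B x x = 2 * k) :
    ∃ ε : L → L → ℤˣ,
      (∀ α β γ : L, ε α β * ε (α + β) γ = ε α (β + γ) * ε β γ) ∧
      (∀ α β : L, ε α β = (-1 : ℤˣ) ^ (B α β) * ε β α) ∧
      (∀ α : L, ε α (-α) = (-1 : ℤˣ) ^ (B α α / 2)) ∧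
      (∀ α : L, ε 0 α = 1 ∧ ε α 0 = 1) := by
  classical
  set ι := Module.Free.ChooseBasisIndex ℤ L with hι
  let b : Module.Basis ι ℤ L := Module.Free.chooseBasis ℤ L
  let e := Fintype.equivFin ι
  let C : L →ₗ[ℤ] L →ₗ[ℤ] ℤ := b.constr ℤ fun i => b.constr ℤ fun j =>
    if (e i : ℕ) < e j then 0 else if i = j then (heven (b i)).choose else B (b i) (b j)
  have hCb : ∀ i j, C (b i) (b j) =
      if (e i : ℕ) < e j then 0 else if i = j then (heven (b i)).choose else B (b i) (b j) := by
    intro i j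
    have h1 : C (b i) = b.constr ℤ fun j =>
        if (e i : ℕ) < e j then 0 else if i = j then (heven (b i)).choose else B (b i) (b j) :=
      b.constr_basis ℤ _ i
    rw [h1, b.constr_basis]
  have hC : ∀ x y, C x y + C y x = B x y := by
    have key : C + C.flip = B := by
      apply b.ext; intro i; apply b.ext; intro j
      simp only [LinearMap.add_apply, LinearMap.flip_apply, hCb]
      rcases lt_trichotomy ((e i : ℕ)) (e j) with h | h | h
      · have hij : i ≠ j := fun hh => by simp [hh] at h
        simp [h, not_lt.mpr h.le, hij, hij.symm, hsymm (b j) (b i)]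
      · have hij : i = j := e.injective (Fin.ext h)
        subst hij
        rw [if_neg (lt_irrefl _), if_pos rfl]
        have hs := (heven (b i)).choose_spec
        omega
      · have hij : i ≠ j := fun hh => by simp [hh] at h
        simp [h, not_lt.mpr h.le, hij, hij.symm]
    intro x y
    have := LinearMap.congr_fun (LinearMap.congr_fun key x) y
    simpa using this
  have hdiag : ∀ x, 2 * C x x = B x x := by
    intro x; rw [← hC x x]; ring
  have key2 : ∀ n : ℤ, (-1 : ℤˣ) ^ (2 * n) = 1 := by
    intro n
    rw [zpow_mul, zpow_two, neg_one_mul, neg_neg, one_zpow]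
  refine ⟨fun α β => (-1 : ℤˣ) ^ (C α β), ?_, ?_, ?_, ?_⟩
  · intro α β γ
    rw [← zpow_add, ← zpow_add]
    congr 1
    simp only [map_add, LinearMap.add_apply]
    ring
  · intro α β
    rw [← zpow_add]
    have h : B α β + C β α = C α β + 2 * C β α := by
      have := hC α β; omega
    rw [h, zpow_add, key2, mul_one]
  · intro α
    show (-1 : ℤˣ) ^ (C α (-α)) = (-1 : ℤˣ) ^ (B α α / 2)
    have h1 : C α (-α) = -C α α := by simp
    have h2 : B α α / 2 = C α α := by have := hdiag α; omega
    rw [h1, h2]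
    have : -C α α = C α α + 2 * (-C α α) := by ring
    rw [this, zpow_add, key2, mul_one]
  · intro α
    constructor <;> simp
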